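/- arXiv:1810.03982 — 2 statements merged into one kernel-verified Lean document; each statement's English description precedes it below -/
import Mathlib

section
/- If X is a chi-squared random variable with n degrees of freedom, then for every x > 0, P(X - n ≥ 2√(nx) + 2x) ≤ e^{-x}. -/
open MeasureTheory ProbabilityTheory

lemma neg_log_one_sub_le' {u : ℝ} (h0 : 0 ≤ u) (h1 : u < 1) :
    -Real.log (1 - u) ≤ u + u ^ 2 / (2 * (1 - u)) := by
  have hv : 0 < 1 - u := by linarith
  set y : ℝ := u + u ^ 2 / (2 * (1 - u)) with hy_def
  have hy : 0 ≤ y := by positivity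
  have h2 : 1 + y + y ^ 2 / 2 ≤ Real.exp y := Real.quadratic_le_exp_of_nonneg hy
  have key : 1 ≤ (1 - u) * (1 + y + y ^ 2 / 2) := by
    rw [hy_def]
    have h4 : 0 ≤ ((1 - u) - 1) ^ 4 := by positivity
    have hne : (1 - u) ≠ 0 := ne_of_gt hv
    field_simp
    nlinarith [sq_nonneg ((1-u)^2 - 2*(1-u) + 1), sq_nonneg u, sq_nonneg (u*(1-u))]
  have hinv : (1 - u)⁻¹ ≤ Real.exp y := by
    rw [inv_le_iff_one_le_mul₀ hv]
    nlinarith [Real.exp_pos y]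
  calc -Real.log (1 - u) = Real.log (1 - u)⁻¹ := (Real.log_inv _).symm
    _ ≤ Real.log (Real.exp y) := Real.log_le_log (by positivity) hinv
    _ = y := Real.log_exp y

lemma gaussian_integral_exp_sq {t : ℝ} (ht : t < 1 / 2) :
    ∫ y, Real.exp (t * y ^ 2) ∂(gaussianReal 0 1) = (Real.sqrt (1 - 2 * t))⁻¹ := by
  have hb : 0 < 1 / 2 - t := by linarith
  rw [gaussianReal_of_var_ne_zero 0 one_ne_zero, gaussianPDF_def]
  simp_rw [ENNReal.ofReal]
  rw [integral_withDensity_eq_integral_smul (measurable_gaussianPDFReal 0 1).real_toNNReal]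
  have heq : ∀ y : ℝ, (gaussianPDFReal 0 1 y).toNNReal • Real.exp (t * y ^ 2)
      = (Real.sqrt (2 * Real.pi))⁻¹ * Real.exp (-(1 / 2 - t) * y ^ 2) := by
    intro y
    rw [NNReal.smul_def, smul_eq_mul, Real.coe_toNNReal _ (gaussianPDFReal_nonneg 0 1 y)]
    simp only [gaussianPDFReal, NNReal.coe_one, mul_one, sub_zero]
    rw [mul_assoc, ← Real.exp_add]
    congr 2
    ring
  rw [show (fun y => (gaussianPDFReal 0 1 y).toNNReal • Real.exp (t * y ^ 2))
      = fun y => (Real.sqrt (2 * Real.pi))⁻¹ * Real.exp (-(1 / 2 - t) * y ^ 2) from funext heq]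
  rw [integral_const_mul, integral_gaussian]
  rw [show (1 : ℝ) - 2 * t = 2 * (1 / 2 - t) by ring]
  rw [Real.sqrt_div Real.pi_nonneg, Real.sqrt_mul (by norm_num : (0:ℝ) ≤ 2),
    Real.sqrt_mul (by norm_num : (0:ℝ) ≤ 2)]
  have h1 : Real.sqrt Real.pi > 0 := Real.sqrt_pos.mpr Real.pi_pos
  have h2 : Real.sqrt (1 / 2 - t) > 0 := Real.sqrt_pos.mpr hb
  have h3 : Real.sqrt 2 > 0 := Real.sqrt_pos.mpr (by norm_num)
  have h4 : Real.sqrt (1 - 2 * t) > 0 := Real.sqrt_pos.mpr (by linarith)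
  field_simp

lemma gaussian_integrable_exp_sq {t : ℝ} (ht : t < 1 / 2) :
    Integrable (fun y => Real.exp (t * y ^ 2)) (gaussianReal 0 1) := by
  have hb : 0 < 1 / 2 - t := by linarith
  rw [gaussianReal_of_var_ne_zero 0 one_ne_zero, gaussianPDF_def]
  simp_rw [ENNReal.ofReal]
  rw [integrable_withDensity_iff_integrable_smul
    (measurable_gaussianPDFReal 0 1).real_toNNReal]
  have heq : ∀ y : ℝ, (gaussianPDFReal 0 1 y).toNNReal • Real.exp (t * y ^ 2)
      = (Real.sqrt (2 * Real.pi))⁻¹ * Real.exp (-(1 / 2 - t) * y ^ 2) := by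
    intro y
    rw [NNReal.smul_def, smul_eq_mul, Real.coe_toNNReal _ (gaussianPDFReal_nonneg 0 1 y)]
    simp only [gaussianPDFReal, NNReal.coe_one, mul_one, sub_zero]
    rw [mul_assoc, ← Real.exp_add]
    congr 2
    ring
  rw [show (fun y => (gaussianPDFReal 0 1 y).toNNReal • Real.exp (t * y ^ 2))
      = fun y => (Real.sqrt (2 * Real.pi))⁻¹ * Real.exp (-(1 / 2 - t) * y ^ 2) from funext heq]
  exact (integrable_exp_neg_mul_sq hb).const_mul _

/-- Laurent–Massart upper tail bound for chi-squared: if `X = ∑ i, g i ^ 2` with `g i`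
i.i.d. standard Gaussians, then for all `x > 0`, `P(X - n ≥ 2√(nx) + 2x) ≤ e^{-x}`. -/
theorem chi_squared_upper_tail {Ω : Type*} [MeasurableSpace Ω] (P : Measure Ω)
    [IsProbabilityMeasure P] (n : ℕ) (g : Fin n → Ω → ℝ)
    (hmeas : ∀ i, Measurable (g i))
    (hindep : iIndepFun g P)
    (hgauss : ∀ i, P.map (g i) = gaussianReal 0 1)
    (x : ℝ) (hx : 0 < x) :
    P {ω | 2 * Real.sqrt (n * x) + 2 * x ≤ (∑ i, (g i ω) ^ 2) - n}
      ≤ ENNReal.ofReal (Real.exp (-x)) := by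
  rcases Nat.eq_zero_or_pos n with hn | hn
  · subst hn
    have hempty : {ω : Ω | 2 * Real.sqrt ((0:ℕ) * x) + 2 * x
        ≤ (∑ i : Fin 0, (g i ω) ^ 2) - (0:ℕ)} = ∅ := by
      ext ω
      simp only [Set.mem_setOf_eq, Set.mem_empty_iff_false, iff_false, not_le,
        Finset.univ_eq_empty, Finset.sum_empty, Nat.cast_zero, zero_mul, Real.sqrt_zero]
      linarith
    rw [hempty]
    simp
  -- main case : n ≥ 1
  set s : ℝ := Real.sqrt n with hs_def
  set r : ℝ := Real.sqrt x with hr_def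
  have hs1 : 1 ≤ s := by
    rw [hs_def, show (1:ℝ) = Real.sqrt 1 by simp]
    exact Real.sqrt_le_sqrt (by exact_mod_cast hn)
  have hs0 : 0 < s := lt_of_lt_of_le one_pos hs1
  have hr0 : 0 < r := Real.sqrt_pos.mpr hx
  have hs2 : s ^ 2 = n := Real.sq_sqrt (Nat.cast_nonneg n)
  have hr2 : r ^ 2 = x := Real.sq_sqrt hx.le
  have hsr : Real.sqrt ((n : ℝ) * x) = s * r := Real.sqrt_mul (Nat.cast_nonneg n) x
  set t : ℝ := r / (s + 2 * r) with ht_def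
  have hden : 0 < s + 2 * r := by linarith
  have ht0 : 0 < t := div_pos hr0 hden
  have h1sub : 1 - 2 * t = s / (s + 2 * r) := by
    rw [ht_def]; field_simp; ring
  have h1sub0 : 0 < 1 - 2 * t := by rw [h1sub]; positivity
  have ht_half : t < 1 / 2 := by linarith
  -- the squared variables
  set Y : Fin n → Ω → ℝ := fun i ω => g i ω ^ 2 with hY_def
  have hYmeas : ∀ i, Measurable (Y i) := fun i => (hmeas i).pow_const 2
  have hindepY : iIndepFun Y P :=
    hindep.comp (fun _ y => y ^ 2) (fun _ => measurable_id.pow_const 2)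
  -- integrability of exp (t * Y i)
  have hcont : Continuous (fun y : ℝ => Real.exp (t * y ^ 2)) := by fun_prop
  have hIntY : ∀ i, Integrable (fun ω => Real.exp (t * Y i ω)) P := by
    intro i
    have h1 : Integrable (fun y => Real.exp (t * y ^ 2)) (P.map (g i)) := by
      rw [hgauss i]; exact gaussian_integrable_exp_sq ht_half
    have := (integrable_map_measure hcont.aestronglyMeasurable
      (hmeas i).aemeasurable).mp h1
    exact this
  -- mgf of each Y i
  have hmgfY : ∀ i, mgf (Y i) P t = (Real.sqrt (1 - 2 * t))⁻¹ := by
    intro i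
    have h1 : mgf (Y i) P t = ∫ y, Real.exp (t * y ^ 2) ∂(P.map (g i)) := by
      rw [integral_map (hmeas i).aemeasurable hcont.aestronglyMeasurable]
      rfl
    rw [h1, hgauss i, gaussian_integral_exp_sq ht_half]
  -- Chernoff bound
  set ε : ℝ := (n : ℝ) + 2 * Real.sqrt (n * x) + 2 * x with hε_def
  have hInt_sum : Integrable (fun ω => Real.exp (t * (∑ i, Y i) ω)) P :=
    hindepY.integrable_exp_mul_sum hYmeas (fun i _ => hIntY i)
  have hchernoff := measure_ge_le_exp_mul_mgf (X := ∑ i, Y i) (μ := P) ε ht0.le hInt_sum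
  rw [hindepY.mgf_sum hYmeas] at hchernoff
  simp only [hmgfY, Finset.prod_const, Finset.card_univ, Fintype.card_fin] at hchernoff
  -- identify the sets
  have hset : {ω | 2 * Real.sqrt (n * x) + 2 * x ≤ (∑ i, (g i ω) ^ 2) - n}
      = {ω | ε ≤ (∑ i, Y i) ω} := by
    ext ω
    simp only [Set.mem_setOf_eq, hε_def, Finset.sum_apply, hY_def]
    constructor <;> intro h <;> linarith
  -- numeric bound
  have hbound : Real.exp (-t * ε) * ((Real.sqrt (1 - 2 * t))⁻¹) ^ n ≤ Real.exp (-x) := by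
    have hlog : -(Real.log (1 - 2 * t) / 2) ≤ t + t ^ 2 / (1 - 2 * t) := by
      have h := neg_log_one_sub_le' (u := 2 * t) (by linarith) (by linarith)
      have heq : (2 * t) ^ 2 / (2 * (1 - 2 * t)) = 2 * (t ^ 2 / (1 - 2 * t)) := by
        field_simp
      rw [heq] at h
      linarith
    have hsqrt : (Real.sqrt (1 - 2 * t))⁻¹ = Real.exp (-(Real.log (1 - 2 * t) / 2)) := by
      rw [← Real.log_sqrt h1sub0.le, Real.exp_neg,
        Real.exp_log (Real.sqrt_pos.mpr h1sub0)]
    have hpow : ((Real.sqrt (1 - 2 * t))⁻¹) ^ n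
        = Real.exp ((n : ℝ) * (-(Real.log (1 - 2 * t) / 2))) := by
      rw [hsqrt, ← Real.exp_nat_mul]
    rw [hpow, ← Real.exp_add, Real.exp_le_exp]
    have hstep : (n : ℝ) * (-(Real.log (1 - 2 * t) / 2))
        ≤ (n : ℝ) * (t + t ^ 2 / (1 - 2 * t)) :=
      mul_le_mul_of_nonneg_left hlog (Nat.cast_nonneg n)
    have hkey : (n : ℝ) * (t + t ^ 2 / (1 - 2 * t)) - t * ε = -x := by
      rw [hε_def, hsr, ← hs2, ← hr2, h1sub, ht_def]
      field_simp
      ring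
    linarith
  -- conclude
  rw [hset]
  calc P {ω | ε ≤ (∑ i, Y i) ω}
      = ENNReal.ofReal (P {ω | ε ≤ (∑ i, Y i) ω}).toReal := by
        rw [ENNReal.ofReal_toReal (measure_ne_top _ _)]
    _ ≤ ENNReal.ofReal (Real.exp (-t * ε) * ((Real.sqrt (1 - 2 * t))⁻¹) ^ n) :=
        ENNReal.ofReal_le_ofReal hchernoff
    _ ≤ ENNReal.ofReal (Real.exp (-x)) := ENNReal.ofReal_le_ofReal hbound
end

section
/- Let η ~ N(0, I_n) and let S₁, ..., S_M be linear subspaces of ℝ^n, each of dimension at most ℓ, with M ≤ n₀^{ℓ} for some n₀ ≥ 2. If ℓ log(n₀)/n ≤ 1/32 then, with probability at least 1 − 2n₀^{-ℓ}, for every i and every x ∈ S_i, ‖x − η‖² ≥ ‖η‖²(1 − 20ℓ log(n₀)/n). -/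
open MeasureTheory ProbabilityTheory Real Set
open scoped ENNReal NNReal RealInnerProductSpace

namespace GaussFar


lemma lintegral_pi_prod : ∀ (n : ℕ) (μ : Measure ℝ) [SigmaFinite μ] (f : Fin n → ℝ → ℝ≥0∞),
    (∀ i, Measurable (f i)) →
    ∫⁻ y, ∏ i, f i (y i) ∂Measure.pi (fun _ : Fin n => μ) = ∏ i, ∫⁻ x, f i x ∂μ := by
  intro n
  induction n with
  | zero =>
      intro μ _ f hf
      simp [Measure.pi_empty_univ]
  | succ n ih =>
      intro μ _ f hf
      have hmp := (measurePreserving_piFinSuccAbove (fun _ : Fin (n+1) => μ) 0)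
      set e := MeasurableEquiv.piFinSuccAbove (fun _ : Fin (n+1) => ℝ) 0
      have key : ∫⁻ y, ∏ i, f i (y i) ∂Measure.pi (fun _ : Fin (n+1) => μ)
          = ∫⁻ z, f 0 z.1 * ∏ j : Fin n, f j.succ (z.2 j)
              ∂(μ.prod (Measure.pi fun _ : Fin n => μ)) := by
        rw [← hmp.lintegral_comp_emb (MeasurableEquiv.measurableEmbedding e)]
        congr 1
        ext y
        rw [Fin.prod_univ_succ]
        congr 1
      rw [key, lintegral_prod_mul (f := fun x => f 0 x)
        (g := fun w : Fin n → ℝ => ∏ j : Fin n, f j.succ (w j)) (hf 0).aemeasurable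
        (Finset.measurable_prod _ (fun j _ => (hf j.succ).comp (measurable_pi_apply j))).aemeasurable,
        ih μ (fun j => f j.succ) (fun j => hf j.succ), Fin.prod_univ_succ]




lemma lintegral_exp_sq (u : ℝ) (hu : u < 1/2) :
    ∫⁻ x, ENNReal.ofReal (rexp (u * x^2)) ∂(gaussianReal 0 1)
      = ENNReal.ofReal ((Real.sqrt (1 - 2*u))⁻¹) := by
  have h2 : (0:ℝ) < 1/2 - u := by linarith
  rw [gaussianReal_of_var_ne_zero 0 one_ne_zero,
    lintegral_withDensity_eq_lintegral_mul _ (measurable_gaussianPDF 0 1)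
      (by fun_prop)]
  have heq : ∀ x : ℝ, (gaussianPDF 0 1 x * ENNReal.ofReal (rexp (u * x^2)))
      = ENNReal.ofReal ((Real.sqrt (2*π))⁻¹ * rexp (-(1/2 - u) * x^2)) := by
    intro x
    rw [gaussianPDF, ← ENNReal.ofReal_mul (gaussianPDFReal_nonneg 0 1 x)]
    congr 1
    simp only [gaussianPDFReal]
    rw [mul_assoc, ← Real.exp_add]
    have h3 : -(x - 0)^2/(2*((1:ℝ≥0):ℝ)) + u * x^2 = -(1/2 - u)*x^2 := by push_cast; ring
    rw [h3]
    norm_num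
  simp_rw [Pi.mul_apply, heq]
  rw [← ofReal_integral_eq_lintegral_ofReal
      (((integrable_exp_neg_mul_sq h2).const_mul _))
      (ae_of_all _ (fun x => by positivity))]
  rw [integral_const_mul, integral_gaussian]
  congr 1
  rw [← Real.sqrt_inv, ← Real.sqrt_inv, ← Real.sqrt_mul (by positivity)]
  congr 1
  rw [div_eq_mul_inv, mul_inv, show (2:ℝ)⁻¹ * π⁻¹ * (π * (1/2 - u)⁻¹) = (π * π⁻¹) * (2⁻¹ * (1/2-u)⁻¹) by ring,
    mul_inv_cancel₀ Real.pi_ne_zero, one_mul, ← mul_inv]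
  congr 1
  ring



/-- The standard Gaussian product measure as a density against Lebesgue. -/
lemma pi_gaussian_eq (n : ℕ) :
    Measure.pi (fun _ : Fin n => gaussianReal 0 1)
      = (volume : Measure (Fin n → ℝ)).withDensity
          (fun y => ∏ j, gaussianPDF 0 1 (y j)) := by
  refine Measure.pi_eq (fun s hs => ?_)
  rw [withDensity_apply _ (MeasurableSet.univ_pi hs)]
  have : ∫⁻ y in Set.pi univ s, ∏ j, gaussianPDF 0 1 (y j) ∂(volume : Measure (Fin n → ℝ))
      = ∫⁻ y, ∏ j, (s j).indicator (gaussianPDF 0 1) (y j) ∂(volume : Measure (Fin n → ℝ)) := by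
    rw [← lintegral_indicator (MeasurableSet.univ_pi hs)]
    congr 1
    ext y
    by_cases hy : y ∈ Set.pi univ s
    · rw [Set.indicator_of_mem hy]
      refine Finset.prod_congr rfl (fun j _ => ?_)
      rw [Set.indicator_of_mem (hy j (Set.mem_univ j))]
    · rw [Set.indicator_of_notMem hy]
      rw [Set.mem_univ_pi] at hy
      push_neg at hy
      obtain ⟨j, hj⟩ := hy
      exact (Finset.prod_eq_zero (Finset.mem_univ j)
        (by rw [Set.indicator_of_notMem hj])).symm
  rw [this, volume_pi, lintegral_pi_prod n volume _
    (fun j => (measurable_gaussianPDF 0 1).indicator (hs j))]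
  refine Finset.prod_congr rfl (fun j _ => ?_)
  rw [lintegral_indicator (hs j), gaussianReal_of_var_ne_zero 0 one_ne_zero,
    withDensity_apply _ (hs j)]

lemma map_withDensity {α β : Type*} [MeasurableSpace α] [MeasurableSpace β]
    {μ : Measure α} {ν : Measure β} (e : α ≃ᵐ β) (h : MeasurePreserving e μ ν)
    (g : β → ℝ≥0∞) (hg : Measurable g) :
    (μ.withDensity (fun a => g (e a))).map e = ν.withDensity g := by
  ext s hs
  rw [Measure.map_apply e.measurable hs,
    withDensity_apply _ (e.measurable hs), withDensity_apply _ hs]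
  exact h.setLIntegral_comp_preimage hs hg




lemma lintegral_exp_sum_sq (n : ℕ) (J : Finset (Fin n)) (u : ℝ) (hu : u < 1/2) :
    ∫⁻ y, ENNReal.ofReal (rexp (u * ∑ j ∈ J, (y j)^2))
        ∂(Measure.pi fun _ : Fin n => gaussianReal 0 1)
      = ENNReal.ofReal ((Real.sqrt (1 - 2*u))⁻¹) ^ J.card := by
  classical
  have key : ∀ y : Fin n → ℝ, ENNReal.ofReal (rexp (u * ∑ j ∈ J, (y j)^2))
      = ∏ i, (fun x => if i ∈ J then ENNReal.ofReal (rexp (u * x^2)) else 1) (y i) := by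
    intro y
    simp only []
    rw [Finset.prod_ite_mem, Finset.univ_inter,
      ← ENNReal.ofReal_prod_of_nonneg (fun i _ => (Real.exp_pos _).le),
      ← Real.exp_sum, Finset.mul_sum]
  have hmeas : ∀ i : Fin n, Measurable
      (fun x : ℝ => if i ∈ J then ENNReal.ofReal (rexp (u * x^2)) else 1) := by
    intro i
    split_ifs
    · exact (Real.measurable_exp.comp ((measurable_id.pow_const 2).const_mul u)).ennreal_ofReal
    · exact measurable_const
  have hone : ∀ i : Fin n, (∫⁻ x, (if i ∈ J then ENNReal.ofReal (rexp (u * x^2)) else 1)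
      ∂(gaussianReal 0 1))
      = if i ∈ J then ENNReal.ofReal ((Real.sqrt (1 - 2*u))⁻¹) else 1 := by
    intro i
    by_cases h : i ∈ J
    · simp only [h, if_true]
      exact lintegral_exp_sq u hu
    · simp [h]
  calc ∫⁻ y, ENNReal.ofReal (rexp (u * ∑ j ∈ J, (y j)^2))
        ∂(Measure.pi fun _ : Fin n => gaussianReal 0 1)
      = ∫⁻ y, ∏ i, (if i ∈ J then ENNReal.ofReal (rexp (u * (y i)^2)) else 1)
        ∂(Measure.pi fun _ : Fin n => gaussianReal 0 1) := lintegral_congr key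
    _ = ∏ i, ∫⁻ x, (if i ∈ J then ENNReal.ofReal (rexp (u * x^2)) else 1)
        ∂(gaussianReal 0 1) :=
        lintegral_pi_prod n (gaussianReal 0 1)
          (fun i x => if i ∈ J then ENNReal.ofReal (rexp (u * x^2)) else 1) hmeas
    _ = ∏ i, (if i ∈ J then ENNReal.ofReal ((Real.sqrt (1 - 2*u))⁻¹) else 1) :=
        Finset.prod_congr rfl (fun i _ => hone i)
    _ = _ := by rw [Finset.prod_ite_mem, Finset.univ_inter, Finset.prod_const]

lemma chernoff_upper (n : ℕ) (J : Finset (Fin n)) (a : ℝ) :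
    (Measure.pi fun _ : Fin n => gaussianReal 0 1) {y | a ≤ ∑ j ∈ J, (y j)^2}
      ≤ ENNReal.ofReal (rexp (-(2/5) * a) * Real.sqrt 5 ^ J.card) := by
  set ν := Measure.pi fun _ : Fin n => gaussianReal 0 1
  set g : (Fin n → ℝ) → ℝ≥0∞ := fun y => ENNReal.ofReal (rexp ((2/5) * ∑ j ∈ J, (y j)^2))
    with hg
  have hgmeas : Measurable g := by
    apply Measurable.ennreal_ofReal
    exact Real.measurable_exp.comp ((Finset.measurable_sum J
      (fun j _ => (measurable_pi_apply j).pow_const 2)).const_mul _)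
  set ε := ENNReal.ofReal (rexp ((2/5) * a)) with hε
  have hsub : {y : Fin n → ℝ | a ≤ ∑ j ∈ J, (y j)^2} ⊆ {y | ε ≤ g y} := by
    intro y hy
    exact ENNReal.ofReal_le_ofReal (Real.exp_le_exp.2 (by
      have := hy.out; nlinarith))
  have hint : ∫⁻ y, g y ∂ν = ENNReal.ofReal ((Real.sqrt (1 - 2*(2/5)))⁻¹) ^ J.card :=
    lintegral_exp_sum_sq n J (2/5) (by norm_num)
  have hmark := mul_meas_ge_le_lintegral₀ hgmeas.aemeasurable ε (μ := ν)
  have h1 : ε * ν {y | a ≤ ∑ j ∈ J, (y j)^2} ≤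
      ENNReal.ofReal ((Real.sqrt (1 - 2*(2/5)))⁻¹) ^ J.card := by
    refine le_trans ?_ (hint ▸ hmark)
    exact mul_le_mul_right (measure_mono hsub) ε
  have hε0 : ε ≠ 0 := by simp [hε, Real.exp_pos]
  have hεtop : ε ≠ ⊤ := ENNReal.ofReal_ne_top
  have h2 : ν {y | a ≤ ∑ j ∈ J, (y j)^2} ≤ ε⁻¹ *
      ENNReal.ofReal ((Real.sqrt (1 - 2*(2/5)))⁻¹) ^ J.card := by
    calc ν {y | a ≤ ∑ j ∈ J, (y j)^2}
        = ε⁻¹ * (ε * ν {y | a ≤ ∑ j ∈ J, (y j)^2}) := by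
          rw [← mul_assoc, ENNReal.inv_mul_cancel hε0 hεtop, one_mul]
      _ ≤ _ := mul_le_mul_right h1 _
  refine h2.trans (le_of_eq ?_)
  have hs5 : (Real.sqrt (1 - 2*(2/5)))⁻¹ = Real.sqrt 5 := by
    rw [show (1 - 2*(2/5) : ℝ) = 5⁻¹ by norm_num, Real.sqrt_inv, inv_inv]
  rw [hs5, hε, ← ENNReal.ofReal_inv_of_pos (Real.exp_pos _), ← Real.exp_neg,
    ← ENNReal.ofReal_pow (Real.sqrt_nonneg 5), ← ENNReal.ofReal_mul (Real.exp_pos _).le]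
  ring_nf

lemma chernoff_lower (n : ℕ) :
    (Measure.pi fun _ : Fin n => gaussianReal 0 1) {y | ∑ j, (y j)^2 ≤ (n:ℝ)/2}
      ≤ ENNReal.ofReal (rexp (-(n:ℝ)/16)) := by
  set ν := Measure.pi fun _ : Fin n => gaussianReal 0 1
  set g : (Fin n → ℝ) → ℝ≥0∞ := fun y => ENNReal.ofReal (rexp (-(1/2) * ∑ j, (y j)^2))
    with hg
  have hgmeas : Measurable g := by
    apply Measurable.ennreal_ofReal
    exact Real.measurable_exp.comp ((Finset.measurable_sum Finset.univ
      (fun j _ => (measurable_pi_apply j).pow_const 2)).const_mul _)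
  set ε := ENNReal.ofReal (rexp (-(n:ℝ)/4)) with hε
  have hsub : {y : Fin n → ℝ | ∑ j, (y j)^2 ≤ (n:ℝ)/2} ⊆ {y | ε ≤ g y} := by
    intro y hy
    exact ENNReal.ofReal_le_ofReal (Real.exp_le_exp.2 (by
      have := hy.out; nlinarith))
  have hint : ∫⁻ y, g y ∂ν = ENNReal.ofReal ((Real.sqrt 2)⁻¹) ^ n := by
    have := lintegral_exp_sum_sq n Finset.univ (-(1/2)) (by norm_num)
    rw [hg]
    simp only [Finset.card_univ, Fintype.card_fin] at this
    rw [this, show (1 - 2*(-(1/2)) : ℝ) = 2 by norm_num]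
  have hmark := mul_meas_ge_le_lintegral₀ hgmeas.aemeasurable ε (μ := ν)
  have h1 : ε * ν {y | ∑ j, (y j)^2 ≤ (n:ℝ)/2} ≤ ENNReal.ofReal ((Real.sqrt 2)⁻¹) ^ n := by
    refine le_trans ?_ (hint ▸ hmark)
    exact mul_le_mul_right (measure_mono hsub) ε
  have hε0 : ε ≠ 0 := by simp [hε, Real.exp_pos]
  have hεtop : ε ≠ ⊤ := ENNReal.ofReal_ne_top
  have h2 : ν {y | ∑ j, (y j)^2 ≤ (n:ℝ)/2} ≤ ε⁻¹ * ENNReal.ofReal ((Real.sqrt 2)⁻¹) ^ n := by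
    calc ν {y | ∑ j, (y j)^2 ≤ (n:ℝ)/2}
        = ε⁻¹ * (ε * ν {y | ∑ j, (y j)^2 ≤ (n:ℝ)/2}) := by
          rw [← mul_assoc, ENNReal.inv_mul_cancel hε0 hεtop, one_mul]
      _ ≤ _ := mul_le_mul_right h1 _
  refine h2.trans ?_
  rw [hε, ← ENNReal.ofReal_inv_of_pos (Real.exp_pos _), ← Real.exp_neg,
    ← ENNReal.ofReal_pow (by positivity : (0:ℝ) ≤ (Real.sqrt 2)⁻¹),
    ← ENNReal.ofReal_mul (Real.exp_pos _).le]
  apply ENNReal.ofReal_le_ofReal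
  have hsqrt2 : (Real.sqrt 2)⁻¹ = rexp (-(Real.log 2 / 2)) := by
    rw [Real.sqrt_eq_rpow, Real.rpow_def_of_pos (by norm_num : (0:ℝ) < 2), Real.exp_neg,
      mul_one_div]
  rw [hsqrt2, ← Real.exp_nat_mul, ← Real.exp_add, Real.exp_le_exp]
  have hl2 := Real.log_two_gt_d9
  have hn : (0:ℝ) ≤ n := Nat.cast_nonneg n
  nlinarith




lemma norm_sq_eq_sum_repr {n : ℕ} (b : OrthonormalBasis (Fin n) ℝ (EuclideanSpace ℝ (Fin n)))
    (z : EuclideanSpace ℝ (Fin n)) : ‖z‖^2 = ∑ j, (b.repr z j)^2 := by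
  rw [← b.repr.norm_map z, EuclideanSpace.norm_eq, Real.sq_sqrt (by positivity)]
  exact Finset.sum_congr rfl (fun j _ => by rw [Real.norm_eq_abs, sq_abs])

lemma norm_sq_eq_sum_coord {n : ℕ} (z : EuclideanSpace ℝ (Fin n)) :
    ‖z‖^2 = ∑ j, (z j)^2 := by
  rw [EuclideanSpace.norm_eq, Real.sq_sqrt (by positivity)]
  exact Finset.sum_congr rfl (fun j _ => by rw [Real.norm_eq_abs, sq_abs])

lemma dist_sq_ge {n : ℕ} (Sp : Submodule ℝ (EuclideanSpace ℝ (Fin n)))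
    (b : OrthonormalBasis (Fin n) ℝ (EuclideanSpace ℝ (Fin n)))
    (J : Finset (Fin n))
    (hbJ : ∀ j, j ∉ J → ∀ x ∈ Sp, ⟪b j, x⟫ = 0)
    (x η' : EuclideanSpace ℝ (Fin n)) (hx : x ∈ Sp) :
    ‖η'‖^2 - ∑ j ∈ J, (b.repr η' j)^2 ≤ ‖x - η'‖^2 := by
  have h1 : ‖x - η'‖^2 = ∑ j, (b.repr (x - η') j)^2 := norm_sq_eq_sum_repr b _
  have h2 : ∑ j ∈ Finset.univ \ J, (b.repr (x - η') j)^2 ≤ ∑ j, (b.repr (x - η') j)^2 :=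
    Finset.sum_le_sum_of_subset_of_nonneg (Finset.subset_univ _)
      (fun j _ _ => sq_nonneg _)
  have h3 : ∀ j ∈ Finset.univ \ J, (b.repr (x - η') j)^2 = (b.repr η' j)^2 := by
    intro j hj
    have hj' : j ∉ J := (Finset.mem_sdiff.1 hj).2
    have : b.repr x j = 0 := by
      rw [b.repr_apply_apply]
      exact hbJ j hj' x hx
    rw [map_sub]
    simp only [PiLp.sub_apply]
    rw [this, zero_sub, neg_sq]
  have h4 : ∑ j ∈ Finset.univ \ J, (b.repr η' j)^2
      = ‖η'‖^2 - ∑ j ∈ J, (b.repr η' j)^2 := by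
    rw [norm_sq_eq_sum_repr b η', eq_sub_iff_add_eq,
      Finset.sum_sdiff (Finset.subset_univ J)]
  calc ‖η'‖^2 - ∑ j ∈ J, (b.repr η' j)^2
      = ∑ j ∈ Finset.univ \ J, (b.repr η' j)^2 := h4.symm
    _ = ∑ j ∈ Finset.univ \ J, (b.repr (x - η') j)^2 :=
        (Finset.sum_congr rfl h3).symm
    _ ≤ ∑ j, (b.repr (x - η') j)^2 := h2
    _ = ‖x - η'‖^2 := h1.symm

lemma exists_good_basis {n ℓ : ℕ} (Sp : Submodule ℝ (EuclideanSpace ℝ (Fin n)))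
    (hdim : Module.finrank ℝ Sp ≤ ℓ) :
    ∃ (b : OrthonormalBasis (Fin n) ℝ (EuclideanSpace ℝ (Fin n))) (J : Finset (Fin n)),
      J.card ≤ ℓ ∧ ∀ j, j ∉ J → ∀ x ∈ Sp, ⟪b j, x⟫ = 0 := by
  classical
  set d := Module.finrank ℝ Sp with hd
  have hdn : d ≤ n := by
    have := Submodule.finrank_le Sp
    rwa [finrank_euclideanSpace_fin] at this
  set c := stdOrthonormalBasis ℝ Sp
  set v : Fin n → EuclideanSpace ℝ (Fin n) :=
    fun j => if h : (j : ℕ) < d then ((c ⟨(j:ℕ), h⟩ : Sp) : EuclideanSpace ℝ (Fin n)) else 0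
    with hv
  set s : Set (Fin n) := {j | (j : ℕ) < d} with hs
  have horth : Orthonormal ℝ (s.restrict v) := by
    rw [orthonormal_iff_ite]
    rintro ⟨i, hi⟩ ⟨j, hj⟩
    have hi' : (i : ℕ) < d := hi
    have hj' : (j : ℕ) < d := hj
    change ⟪v i, v j⟫ = _
    rw [hv]
    simp only [hi', hj', dif_pos]
    rw [← Submodule.coe_inner, orthonormal_iff_ite.1 c.orthonormal]
    refine if_congr ?_ rfl rfl
    simp [Fin.ext_iff, Subtype.ext_iff]
  obtain ⟨b, hb⟩ := horth.exists_orthonormalBasis_extension_of_card_eq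
    (by rw [finrank_euclideanSpace_fin, Fintype.card_fin])
  set J : Finset (Fin n) := Finset.univ.filter (fun j => (j : ℕ) < d) with hJ
  refine ⟨b, J, ?_, ?_⟩
  · have hc : J.card ≤ (Finset.range d).card := by
      refine Finset.card_le_card_of_injOn (fun j : Fin n => (j : ℕ))
        (fun j hj => Finset.mem_range.2 (Finset.mem_filter.1 hj).2)
        (fun a _ b _ h => Fin.val_injective h)
    rw [Finset.card_range] at hc
    exact hc.trans hdim
  · intro j hjJ x hx
    have hjd : ¬ ((j : ℕ) < d) := by
      intro h
      exact hjJ (Finset.mem_filter.2 ⟨Finset.mem_univ j, h⟩)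
    have hxrepr : x = ∑ k, c.repr ⟨x, hx⟩ k • ((c k : Sp) : EuclideanSpace ℝ (Fin n)) := by
      have h2 : ((∑ k, c.repr ⟨x,hx⟩ k • c k : Sp) : EuclideanSpace ℝ (Fin n))
          = ((⟨x,hx⟩ : Sp) : EuclideanSpace ℝ (Fin n)) := congrArg _ (c.sum_repr ⟨x,hx⟩)
      rw [AddSubmonoidClass.coe_finset_sum] at h2
      simp only [SetLike.val_smul] at h2
      exact h2.symm
    rw [hxrepr, inner_sum]
    refine Finset.sum_eq_zero (fun k _ => ?_)
    rw [real_inner_smul_right]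
    have hkmem : (⟨(k : ℕ), lt_of_lt_of_le k.2 hdn⟩ : Fin n) ∈ s := k.2
    have hbk : b ⟨(k : ℕ), lt_of_lt_of_le k.2 hdn⟩ = ((c k : Sp) : EuclideanSpace ℝ (Fin n)) := by
      rw [hb _ hkmem, hv]
      have hk' : ((⟨(k : ℕ), lt_of_lt_of_le k.2 hdn⟩ : Fin n) : ℕ) < d := k.2
      simp only [hk', dif_pos]
    rw [← hbk, orthonormal_iff_ite.1 b.orthonormal]
    have hne : j ≠ ⟨(k : ℕ), lt_of_lt_of_le k.2 hdn⟩ := by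
      intro h
      apply hjd
      rw [h]
      exact k.2
    rw [if_neg hne, mul_zero]




lemma joint_law {Ω : Type*} [MeasurableSpace Ω] (P : Measure Ω) [IsProbabilityMeasure P]
    (n : ℕ) (η : Ω → EuclideanSpace ℝ (Fin n)) (hmeas : ∀ i, Measurable fun ω => η ω i)
    (hindep : iIndepFun (fun i ω => η ω i) P)
    (hgauss : ∀ i, P.map (fun ω => η ω i) = gaussianReal 0 1) :
    P.map (fun ω (i : Fin n) => η ω i) = Measure.pi (fun _ : Fin n => gaussianReal 0 1) := by
  refine (Measure.pi_eq (fun s hs => ?_)).symm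
  have hm : Measurable (fun ω (i : Fin n) => η ω i) := measurable_pi_lambda _ hmeas
  rw [Measure.map_apply hm (MeasurableSet.univ_pi hs)]
  have hpre : (fun ω (i : Fin n) => η ω i) ⁻¹' (Set.pi univ s)
      = ⋂ i, (fun ω => η ω i) ⁻¹' (s i) := by
    ext ω; simp [Set.mem_univ_pi]
  rw [hpre, hindep.meas_iInter (fun i => ⟨s i, hs i, rfl⟩)]
  exact Finset.prod_congr rfl fun i _ => by
    rw [← hgauss i, Measure.map_apply (hmeas i) (hs i)]

/-- Invariance of the standard Gaussian product measure under coordinate change by an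
orthonormal basis. -/
lemma coord_law {Ω : Type*} [MeasurableSpace Ω] (P : Measure Ω) [IsProbabilityMeasure P]
    (n : ℕ) (η : Ω → EuclideanSpace ℝ (Fin n)) (hmeas : ∀ i, Measurable fun ω => η ω i)
    (hindep : iIndepFun (fun i ω => η ω i) P)
    (hgauss : ∀ i, P.map (fun ω => η ω i) = gaussianReal 0 1)
    (b : OrthonormalBasis (Fin n) ℝ (EuclideanSpace ℝ (Fin n))) :
    P.map (fun ω (j : Fin n) => b.repr (η ω) j)
      = Measure.pi (fun _ : Fin n => gaussianReal 0 1) := by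
  classical
  set e := (MeasurableEquiv.toLp 2 (Fin n → ℝ)).symm with he
  set brepr : EuclideanSpace ℝ (Fin n) ≃ₗᵢ[ℝ] EuclideanSpace ℝ (Fin n) := b.repr with hbrepr
  set meq : (Fin n → ℝ) ≃ᵐ (Fin n → ℝ) :=
    (e.symm.trans brepr.toMeasurableEquiv).trans e with hmeq
  have hcoe : ∀ y : Fin n → ℝ, meq y = fun j => b.repr (e.symm y) j := fun y => rfl
  have hmp : MeasurePreserving meq (volume : Measure (Fin n → ℝ)) volume := by
    have h1 : MeasurePreserving (e.symm) (volume : Measure (Fin n → ℝ)) volume :=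
      (EuclideanSpace.volume_preserving_symm_measurableEquiv_toLp (Fin n)).symm
    have h2 : MeasurePreserving brepr volume volume := b.measurePreserving_repr
    have h3 : MeasurePreserving e volume volume :=
      EuclideanSpace.volume_preserving_symm_measurableEquiv_toLp (Fin n)
    exact h3.comp (h2.comp h1)
  set D : (Fin n → ℝ) → ℝ≥0∞ := fun y => ∏ j, gaussianPDF 0 1 (y j) with hD
  have hDmeas : Measurable D :=
    Finset.measurable_prod _ (fun j _ => (measurable_gaussianPDF 0 1).comp (measurable_pi_apply j))
  have hDrad : ∀ y : Fin n → ℝ,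
      D y = ENNReal.ofReal ((Real.sqrt (2*π))⁻¹ ^ n * rexp (-(∑ j, (y j)^2)/2)) := by
    intro y
    rw [hD]
    simp only [gaussianPDF, gaussianPDFReal]
    rw [← ENNReal.ofReal_prod_of_nonneg (fun j _ => by positivity),
      Finset.prod_mul_distrib, Finset.prod_const, ← Real.exp_sum, Finset.card_univ,
      Fintype.card_fin]
    congr 2
    · push_cast
      norm_num
    · congr 1
      push_cast
      simp only [sub_zero, mul_one]
      rw [← Finset.sum_div]
      congr 1
      simp
  have hDinv : ∀ y, D (meq y) = D y := by
    intro y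
    rw [hDrad, hDrad]
    congr 3
    have h1 : ∑ j, (meq y j)^2 = ‖b.repr (e.symm y)‖^2 := by
      rw [norm_sq_eq_sum_coord]
      exact Finset.sum_congr rfl (fun j _ => by rw [hcoe])
    have h2 : ∑ j, (y j)^2 = ‖e.symm y‖^2 := by
      rw [norm_sq_eq_sum_coord]
      exact rfl
    rw [h1, h2, brepr.norm_map]
  have hmapinv : (Measure.pi (fun _ : Fin n => gaussianReal 0 1)).map meq
      = Measure.pi (fun _ : Fin n => gaussianReal 0 1) := by
    rw [pi_gaussian_eq]
    have := map_withDensity meq hmp D hDmeas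
    rw [show (fun a => D (meq a)) = D from funext hDinv] at this
    exact this
  have hjl := joint_law P n η hmeas hindep hgauss
  have hcomp : (fun ω (j : Fin n) => b.repr (η ω) j)
      = meq ∘ (fun ω (i : Fin n) => η ω i) := rfl
  rw [hcomp, ← Measure.map_map meq.measurable (measurable_pi_lambda _ hmeas), hjl, hmapinv]


end GaussFar
open GaussFar in
/-- Union bound over subspaces: let `η ~ N(0, I_n)` and `S₁, ..., S_M` be subspaces of
`ℝ^n` of dimension at most `ℓ` with `M ≤ n₀^ℓ`, `n₀ ≥ 2`. If `ℓ log(n₀)/n ≤ 1/32`, then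
with probability at least `1 - 2 n₀^{-ℓ}`, every point of every `S_i` is at squared
distance at least `‖η‖²(1 - 20 ℓ log(n₀)/n)` from `η`. -/
theorem gaussian_far_from_subspaces {Ω : Type*} [MeasurableSpace Ω] (P : Measure Ω)
    [IsProbabilityMeasure P] (n ℓ M n₀ : ℕ) (hn₀ : 2 ≤ n₀) (hM : M ≤ n₀ ^ ℓ)
    (S : Fin M → Submodule ℝ (EuclideanSpace ℝ (Fin n)))
    (hdim : ∀ i, Module.finrank ℝ (S i) ≤ ℓ)
    (η : Ω → EuclideanSpace ℝ (Fin n))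
    (hmeas : ∀ i, Measurable (fun ω => η ω i))
    (hindep : iIndepFun (fun i ω => η ω i) P)
    (hgauss : ∀ i, P.map (fun ω => η ω i) = gaussianReal 0 1)
    (hℓ : (ℓ : ℝ) * Real.log n₀ / n ≤ 1 / 32) :
    ENNReal.ofReal (1 - 2 / (n₀ : ℝ) ^ ℓ)
      ≤ P {ω | ∀ i, ∀ x ∈ S i,
            ‖η ω‖ ^ 2 * (1 - 20 * (ℓ : ℝ) * Real.log n₀ / n) ≤ ‖x - η ω‖ ^ 2} := by
  classical
  rcases Nat.eq_zero_or_pos ℓ with hℓ0 | hℓpos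
  · subst hℓ0
    rw [ENNReal.ofReal_of_nonpos (by norm_num)]
    exact zero_le
  rcases Nat.eq_zero_or_pos n with hn0 | hnpos
  · subst hn0
    have hset : {ω | ∀ i, ∀ x ∈ S i,
        ‖η ω‖ ^ 2 * (1 - 20 * (ℓ : ℝ) * Real.log n₀ / (0:ℕ)) ≤ ‖x - η ω‖ ^ 2} = Set.univ := by
      refine Set.eq_univ_of_forall (fun ω i x hx => ?_)
      have hz : η ω = 0 := Subsingleton.elim _ _
      rw [hz, norm_zero]
      simpa using sq_nonneg ‖x - (0 : EuclideanSpace ℝ (Fin 0))‖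
    rw [hset, measure_univ]
    refine ENNReal.ofReal_le_one.2 ?_
    have : 0 ≤ 2 / (n₀:ℝ)^ℓ := by positivity
    linarith
  -- main case
  have h2n : (2:ℝ) ≤ (n₀:ℝ) := by exact_mod_cast hn₀
  have hn₀1 : (1:ℝ) < n₀ := by linarith
  have hlog : 0 < Real.log n₀ := Real.log_pos hn₀1
  set L : ℝ := (ℓ:ℝ) * Real.log n₀ with hLdef
  have hLpos : 0 < L := mul_pos (by exact_mod_cast hℓpos) hlog
  have hnR : (0:ℝ) < n := by exact_mod_cast hnpos
  have h32 : 32 * L ≤ n := by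
    rw [div_le_div_iff₀ hnR (by norm_num)] at hℓ
    linarith
  set r : ℝ := (n₀:ℝ)^ℓ with hrdef
  have hr1 : (1:ℝ) ≤ r := one_le_pow₀ (by linarith)
  have hrpos : (0:ℝ) < r := lt_of_lt_of_le one_pos hr1
  have hexpL : Real.exp L = r := by
    rw [hLdef, Real.exp_nat_mul, Real.exp_log (by positivity)]
  choose b J hJcard hJorth using fun i => exists_good_basis (S i) (hdim i)
  have hηM : Measurable η := by
    have h1 : Measurable (fun ω (i : Fin n) => η ω i) := measurable_pi_lambda _ hmeas
    exact ((MeasurableEquiv.toLp 2 (Fin n → ℝ)).symm).symm.measurable.comp h1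
  set ν := Measure.pi (fun _ : Fin n => gaussianReal 0 1) with hν
  set Z : Ω → (Fin n → ℝ) := fun ω (i : Fin n) => η ω i with hZ
  have hZM : Measurable Z := measurable_pi_lambda _ hmeas
  set W : Fin M → Ω → (Fin n → ℝ) := fun i ω (j : Fin n) => (b i).repr (η ω) j with hW
  have hWM : ∀ i, Measurable (W i) := by
    intro i
    have h1 : Measurable (fun ω => (b i).repr (η ω)) :=
      ((b i).repr.continuous.measurable).comp hηM
    exact measurable_pi_lambda _ (fun j => (measurable_pi_apply j).comp
      (((MeasurableEquiv.toLp 2 (Fin n → ℝ)).symm).measurable.comp h1))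
  set SB : Set (Fin n → ℝ) := {y | ∑ j, (y j)^2 ≤ (n:ℝ)/2} with hSB
  have hSBm : MeasurableSet SB := measurableSet_le
    (Finset.measurable_sum _ (fun j _ => (measurable_pi_apply j).pow_const 2)) measurable_const
  set SA : Fin M → Set (Fin n → ℝ) := fun i => {y | 10*L ≤ ∑ j ∈ J i, (y j)^2} with hSA
  have hSAm : ∀ i, MeasurableSet (SA i) := fun i => measurableSet_le measurable_const
    (Finset.measurable_sum _ (fun j _ => (measurable_pi_apply j).pow_const 2))
  have hlawZ : P.map Z = ν := joint_law P n η hmeas hindep hgauss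
  have hlawW : ∀ i, P.map (W i) = ν := fun i => coord_law P n η hmeas hindep hgauss (b i)
  have hPB : P (Z ⁻¹' SB) ≤ ENNReal.ofReal (Real.exp (-(n:ℝ)/16)) := by
    rw [← Measure.map_apply hZM hSBm, hlawZ]
    exact chernoff_lower n
  have hPA : ∀ i, P (W i ⁻¹' SA i)
      ≤ ENNReal.ofReal (Real.exp (-(4*L)) * Real.sqrt 5 ^ ℓ) := by
    intro i
    rw [← Measure.map_apply (hWM i) (hSAm i), hlawW i]
    refine (chernoff_upper n (J i) (10*L)).trans (ENNReal.ofReal_le_ofReal ?_)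
    have h5 : (1:ℝ) ≤ Real.sqrt 5 := by
      rw [show (1:ℝ) = Real.sqrt 1 from (Real.sqrt_one).symm]
      exact Real.sqrt_le_sqrt (by norm_num)
    have hpow := pow_le_pow_right₀ h5 (hJcard i)
    calc Real.exp (-(2/5)*(10*L)) * Real.sqrt 5 ^ (J i).card
        ≤ Real.exp (-(2/5)*(10*L)) * Real.sqrt 5 ^ ℓ :=
          mul_le_mul_of_nonneg_left hpow (Real.exp_pos _).le
      _ = Real.exp (-(4*L)) * Real.sqrt 5 ^ ℓ := by ring_nf
  set bad : Set Ω := (Z ⁻¹' SB) ∪ ⋃ i, W i ⁻¹' SA i with hbad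
  have hbadm : MeasurableSet bad :=
    (hZM hSBm).union (MeasurableSet.iUnion (fun i => (hWM i) (hSAm i)))
  have key1 : Real.exp (-(n:ℝ)/16) ≤ 1/r := by
    have e1 : Real.exp (-(n:ℝ)/16) ≤ Real.exp (-(2*L)) := Real.exp_le_exp.2 (by linarith)
    have e2 : Real.exp (-(2*L)) = (r*r)⁻¹ := by
      rw [show -(2*L) = -(L+L) by ring, Real.exp_neg, Real.exp_add, hexpL]
    have e3 : r ≤ r * r := by nlinarith
    have e4 : (r*r)⁻¹ ≤ 1/r := by
      rw [inv_eq_one_div]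
      exact one_div_le_one_div_of_le hrpos e3
    calc Real.exp (-(n:ℝ)/16) ≤ Real.exp (-(2*L)) := e1
      _ = (r*r)⁻¹ := e2
      _ ≤ 1/r := e4
  have key2 : (M:ℝ) * (Real.exp (-(4*L)) * Real.sqrt 5 ^ ℓ) ≤ 1/r := by
    have hM' : (M:ℝ) ≤ r := by
      rw [hrdef]
      exact_mod_cast hM
    have h54 : Real.sqrt 5 ≤ 4 := by
      nlinarith [Real.sq_sqrt (by norm_num : (0:ℝ) ≤ 5), Real.sqrt_nonneg 5]
    have hn4 : (4:ℝ) ≤ (n₀:ℝ)^2 := by nlinarith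
    have h5ℓ : Real.sqrt 5 ^ ℓ ≤ r^2 := by
      calc Real.sqrt 5 ^ ℓ ≤ ((n₀:ℝ)^2) ^ ℓ :=
            pow_le_pow_left₀ (Real.sqrt_nonneg 5) (h54.trans hn4) ℓ
        _ = r^2 := by rw [hrdef, ← pow_mul, ← pow_mul, Nat.mul_comm]
    have hexp4 : Real.exp (-(4*L)) = (r^4)⁻¹ := by
      rw [show -(4*L) = -(L+L+L+L) by ring, Real.exp_neg, Real.exp_add, Real.exp_add,
        Real.exp_add, hexpL]
      ring_nf
    have hstep : Real.exp (-(4*L)) * Real.sqrt 5 ^ ℓ ≤ (r^4)⁻¹ * r^2 := by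
      rw [hexp4]
      exact mul_le_mul_of_nonneg_left h5ℓ (by positivity)
    have heq : r * ((r^4)⁻¹ * r^2) = 1/r := by
      field_simp
    calc (M:ℝ) * (Real.exp (-(4*L)) * Real.sqrt 5 ^ ℓ)
        ≤ r * ((r^4)⁻¹ * r^2) := by
          refine mul_le_mul hM' hstep (by positivity) hrpos.le
      _ = 1/r := heq
  have hPbad : P bad ≤ ENNReal.ofReal (2/r) := by
    have hU : P (⋃ i, W i ⁻¹' SA i) ≤ ∑ i : Fin M, P (W i ⁻¹' SA i) :=
      (measure_iUnion_le _).trans (le_of_eq (tsum_fintype _))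
    have hsum : ∑ i : Fin M, P (W i ⁻¹' SA i)
        ≤ ENNReal.ofReal ((M:ℝ) * (Real.exp (-(4*L)) * Real.sqrt 5 ^ ℓ)) := by
      calc ∑ i : Fin M, P (W i ⁻¹' SA i)
          ≤ ∑ _i : Fin M, ENNReal.ofReal (Real.exp (-(4*L)) * Real.sqrt 5 ^ ℓ) :=
            Finset.sum_le_sum (fun i _ => hPA i)
        _ = M * ENNReal.ofReal (Real.exp (-(4*L)) * Real.sqrt 5 ^ ℓ) := by
            rw [Finset.sum_const, Finset.card_univ, Fintype.card_fin, nsmul_eq_mul]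
        _ = ENNReal.ofReal ((M:ℝ) * (Real.exp (-(4*L)) * Real.sqrt 5 ^ ℓ)) := by
            rw [← ENNReal.ofReal_natCast M, ← ENNReal.ofReal_mul (by positivity)]
    calc P bad ≤ P (Z ⁻¹' SB) + P (⋃ i, W i ⁻¹' SA i) := measure_union_le _ _
      _ ≤ ENNReal.ofReal (Real.exp (-(n:ℝ)/16))
          + ENNReal.ofReal ((M:ℝ) * (Real.exp (-(4*L)) * Real.sqrt 5 ^ ℓ)) :=
          add_le_add hPB (hU.trans hsum)
      _ ≤ ENNReal.ofReal (1/r) + ENNReal.ofReal (1/r) :=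
          add_le_add (ENNReal.ofReal_le_ofReal key1) (ENNReal.ofReal_le_ofReal key2)
      _ = ENNReal.ofReal (2/r) := by
          rw [← ENNReal.ofReal_add (by positivity) (by positivity)]
          ring_nf
  have hsub : badᶜ ⊆ {ω | ∀ i, ∀ x ∈ S i,
      ‖η ω‖ ^ 2 * (1 - 20 * (ℓ : ℝ) * Real.log n₀ / n) ≤ ‖x - η ω‖ ^ 2} := by
    intro ω hω
    have hB : Z ω ∉ SB := fun h => hω (Set.mem_union_left _ h)
    have hA : ∀ i, W i ω ∉ SA i :=
      fun i h => hω (Set.mem_union_right _ (Set.mem_iUnion.2 ⟨i, h⟩))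
    intro i x hx
    have hη2 : (n:ℝ)/2 ≤ ‖η ω‖^2 := by
      rw [norm_sq_eq_sum_coord]
      have hB' : (n:ℝ)/2 < ∑ j, (η ω j)^2 := lt_of_not_ge hB
      linarith
    have hq : ∑ j ∈ J i, ((b i).repr (η ω) j)^2 ≤ 10*L := (lt_of_not_ge (hA i)).le
    have hdist := dist_sq_ge (S i) (b i) (J i) (hJorth i) x (η ω) hx
    have hD0 : (0:ℝ) ≤ 20 * (ℓ:ℝ) * Real.log n₀ / n := by positivity
    have hD20 : (20 * (ℓ:ℝ) * Real.log n₀ / n) * n = 20 * L := by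
      field_simp
      ring
    nlinarith [mul_nonneg (sub_nonneg.2 hη2) hD0]
  calc ENNReal.ofReal (1 - 2/(n₀:ℝ)^ℓ)
      = ENNReal.ofReal 1 - ENNReal.ofReal (2/r) := by
        rw [← ENNReal.ofReal_sub _ (by positivity)]
    _ = 1 - ENNReal.ofReal (2/r) := by rw [ENNReal.ofReal_one]
    _ ≤ 1 - P bad := tsub_le_tsub_left hPbad 1
    _ = P badᶜ := (prob_compl_eq_one_sub hbadm).symm
    _ ≤ _ := measure_mono hsub
end
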